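/- Let f, g : [0,T] → [0,∞) be measurable, K > 0, and suppose k : [0,T] → [0,∞) is absolutely continuous with k(0) = k₀ ≥ 0 and satisfies (1/2)(k²)'(t) + K λ² k(t)² ≤ C k(t) g(t) for a.e. t (where λ > 0, C > 0). Then k(t) ≤ e^{−Kλ²t} k₀ + C ∫_0^t e^{−Kλ²(t−τ)} g(τ) dτ for all t ∈ [0,T]. -/

import Mathlib

open Set

/-- ODE comparison lemma: if `k ≥ 0`, `k(0) = k₀`, the function `k²` is
differentiable with derivative `D` on `[0,T]` and
`(1/2)D(t) + Kλ²k(t)² ≤ C k(t) g(t)` there, then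
`k(t) ≤ e^{−Kλ²t}k₀ + C∫_0^t e^{−Kλ²(t−τ)} g(τ) dτ` on `[0,T]`. -/
theorem stmt15 (T K lam C k₀ : ℝ) (hT : 0 ≤ T) (hK : 0 < K) (hlam : 0 < lam)
    (hC : 0 < C) (g k D : ℝ → ℝ)
    (hg : ∀ t ∈ Icc 0 T, 0 ≤ g t)
    (hgint : IntervalIntegrable g MeasureTheory.volume 0 T)
    (hknn : ∀ t ∈ Icc 0 T, 0 ≤ k t)
    (hk0 : k 0 = k₀) (hk₀ : 0 ≤ k₀)
    (hderiv : ∀ t ∈ Icc 0 T, HasDerivAt (fun τ => k τ ^ 2) (D t) t)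
    (hineq : ∀ t ∈ Icc 0 T,
      (1/2) * D t + K * lam ^ 2 * k t ^ 2 ≤ C * k t * g t) :
    ∀ t ∈ Icc 0 T, k t ≤ Real.exp (-K * lam ^ 2 * t) * k₀
      + C * ∫ τ in (0:ℝ)..t, Real.exp (-K * lam ^ 2 * (t - τ)) * g τ := by
  intro t ht
  set a : ℝ := K * lam ^ 2 with ha_def
  have ha : 0 < a := by positivity
  have hcontk2 : ContinuousOn (fun τ => k τ ^ 2) (Icc 0 T) := fun x hx =>
    ((hderiv x hx).continuousAt).continuousWithinAt
  have key : ∀ ε : ℝ, 0 < ε →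
      Real.exp (a * t) * k t ≤ (k₀ + C * ∫ τ in (0:ℝ)..t, Real.exp (a * τ) * g τ) + ε := by
    intro ε hε
    set u2 : ℝ → ℝ := fun τ => Real.exp (2 * a * τ) * k τ ^ 2 with hu2_def
    set w : ℝ → ℝ := fun τ => Real.sqrt (u2 τ + ε ^ 2) with hw_def
    have hu2nn : ∀ x ∈ Icc 0 T, 0 ≤ u2 x := fun x hx => by
      simp only [hu2_def]; positivity
    have hwpos : ∀ x ∈ Icc 0 T, 0 < u2 x + ε ^ 2 := fun x hx => by
      have := hu2nn x hx; nlinarith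
    set w' : ℝ → ℝ := fun x =>
      (2 * a * Real.exp (2 * a * x) * k x ^ 2 + Real.exp (2 * a * x) * D x) / (2 * w x)
      with hw'_def
    have hu2deriv : ∀ x ∈ Icc 0 T, HasDerivAt u2
        (2 * a * Real.exp (2 * a * x) * k x ^ 2 + Real.exp (2 * a * x) * D x) x := by
      intro x hx
      have h1 : HasDerivAt (fun τ : ℝ => Real.exp (2 * a * τ))
          (Real.exp (2 * a * x) * (2 * a)) x :=
        HasDerivAt.exp (by simpa using (hasDerivAt_id x).const_mul (2 * a))
      have h2 := h1.fun_mul (hderiv x hx)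
      rw [hu2_def]
      refine h2.congr_deriv ?_
      ring
    have hwderiv : ∀ x ∈ Icc 0 T, HasDerivAt w (w' x) x := by
      intro x hx
      have h := ((hu2deriv x hx).add_const (ε ^ 2)).sqrt (ne_of_gt (hwpos x hx))
      convert h using 1
    have hIcc_sub : Icc (0:ℝ) t ⊆ Icc 0 T := Icc_subset_Icc le_rfl ht.2
    -- exp(a x) * k x ≤ w x
    have hle : ∀ x ∈ Icc 0 T, Real.exp (a * x) * k x ≤ w x := by
      intro x hx
      have hkx := hknn x hx
      have hsq : (Real.exp (a * x) * k x) ^ 2 ≤ u2 x + ε ^ 2 := by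
        have hee : Real.exp (a * x) ^ 2 = Real.exp (2 * a * x) := by
          rw [sq, ← Real.exp_add]; ring_nf
        have : (Real.exp (a * x) * k x) ^ 2 = u2 x := by
          rw [mul_pow, hee, hu2_def]
        nlinarith [sq_nonneg ε]
      calc Real.exp (a * x) * k x = Real.sqrt ((Real.exp (a * x) * k x) ^ 2) :=
            (Real.sqrt_sq (by positivity)).symm
        _ ≤ w x := Real.sqrt_le_sqrt hsq
    set φ : ℝ → ℝ := fun τ => (C * Real.exp (a * τ)) * g τ with hφ_def
    have hφint' : IntervalIntegrable φ MeasureTheory.volume 0 t := by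
      have hg0t : IntervalIntegrable g MeasureTheory.volume 0 t :=
        hgint.mono_set (by rw [uIcc_of_le ht.1, uIcc_of_le hT]; exact Icc_subset_Icc le_rfl ht.2)
      exact hg0t.continuousOn_mul (by fun_prop)
    have hφint : MeasureTheory.IntegrableOn φ (Icc 0 t) :=
      (intervalIntegrable_iff_integrableOn_Icc_of_le ht.1).mp hφint'
    have hbound : ∀ x ∈ Ioo (0:ℝ) t, w' x ≤ φ x := by
      intro x hx
      have hxT : x ∈ Icc 0 T := hIcc_sub (Ioo_subset_Icc_self hx)
      have hkx := hknn x hxT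
      have hgx := hg x hxT
      have hwx : 0 < w x := Real.sqrt_pos.mpr (hwpos x hxT)
      have hN : 2 * a * Real.exp (2 * a * x) * k x ^ 2 + Real.exp (2 * a * x) * D x
          ≤ 2 * C * Real.exp (2 * a * x) * k x * g x := by
        have h := hineq x hxT
        have h2 : 0 ≤ Real.exp (2 * a * x) * (2 * (C * k x * g x) - (D x + 2 * a * k x ^ 2)) :=
          mul_nonneg (Real.exp_pos _).le (by linarith)
        nlinarith [h2]
      have hek : Real.exp (2 * a * x) * k x ≤ Real.exp (a * x) * w x := by
        have h1 := mul_le_mul_of_nonneg_left (hle x hxT) (Real.exp_pos (a * x)).le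
        have hE : Real.exp (2 * a * x) = Real.exp (a * x) * Real.exp (a * x) := by
          rw [← Real.exp_add, two_mul, add_mul]
        rw [hE, mul_assoc]
        exact h1
      calc w' x ≤ (2 * C * Real.exp (2 * a * x) * k x * g x) / (2 * w x) := by
            rw [hw'_def]
            exact (div_le_div_iff_of_pos_right (by linarith)).mpr hN
        _ ≤ φ x := by
            rw [div_le_iff₀ (by linarith : (0:ℝ) < 2 * w x)]
            simp only [hφ_def]
            have hcg : (0:ℝ) ≤ 2 * C * g x := mul_nonneg (by positivity) hgx
            nlinarith [mul_le_mul_of_nonneg_left hek hcg]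
    have hcontw : ContinuousOn w (Icc 0 t) := by
      apply ContinuousOn.sqrt
      exact (((Real.continuous_exp.comp (continuous_const.mul continuous_id)).continuousOn.mul
        (hcontk2.mono hIcc_sub)).add continuousOn_const)
    have hmain : w t - w 0 ≤ ∫ y in (0:ℝ)..t, φ y :=
      intervalIntegral.sub_le_integral_of_hasDeriv_right_of_le ht.1 hcontw
        (fun x hx => ((hwderiv x (hIcc_sub (Ioo_subset_Icc_self hx))).hasDerivWithinAt))
        hφint hbound
    have hw0 : w 0 ≤ k₀ + ε := by
      have heq : w 0 = Real.sqrt (k₀ ^ 2 + ε ^ 2) := by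
        simp [hw_def, hu2_def, hk0]
      rw [heq]
      calc Real.sqrt (k₀ ^ 2 + ε ^ 2) ≤ Real.sqrt ((k₀ + ε) ^ 2) :=
            Real.sqrt_le_sqrt (by nlinarith)
        _ = k₀ + ε := Real.sqrt_sq (by positivity)
    have hwt := hle t ht
    have hint : (∫ y in (0:ℝ)..t, φ y) = C * ∫ τ in (0:ℝ)..t, Real.exp (a * τ) * g τ := by
      rw [← intervalIntegral.integral_const_mul]
      apply intervalIntegral.integral_congr
      intro τ _
      simp [hφ_def]; ring
    linarith [hmain, hwt, hw0, hint.le, hint.ge]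
  have hfin : Real.exp (a * t) * k t ≤ k₀ + C * ∫ τ in (0:ℝ)..t, Real.exp (a * τ) * g τ :=
    le_of_forall_pos_le_add key
  have hexp : 0 < Real.exp (-(a * t)) := Real.exp_pos _
  have h2 : k t ≤ Real.exp (-(a*t)) * (k₀ + C * ∫ τ in (0:ℝ)..t, Real.exp (a * τ) * g τ) := by
    have := mul_le_mul_of_nonneg_left hfin hexp.le
    rwa [← mul_assoc, ← Real.exp_add, neg_add_cancel, Real.exp_zero, one_mul] at this
  have h3 : (∫ τ in (0:ℝ)..t, Real.exp (-K * lam ^ 2 * (t - τ)) * g τ)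
      = Real.exp (-(a*t)) * ∫ τ in (0:ℝ)..t, Real.exp (a * τ) * g τ := by
    rw [← intervalIntegral.integral_const_mul]
    apply intervalIntegral.integral_congr
    intro τ _
    simp only
    rw [← mul_assoc, ← Real.exp_add]
    rw [ha_def]
    ring_nf
  rw [h3]
  have hat : -K * lam ^ 2 * t = -(a * t) := by ring
  rw [hat]
  nlinarith [h2, hexp]
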